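/- Every permutation matrix Π satisfies Π = (Π ⊙ Π + Π ⊙ Π)/2 with ΠΠᵀ = I; consequently, every extreme point of the set of superstochastic matrices lies in the set S = {(Vᵀ⊙Vᵀ + Hᵀ⊙Hᵀ)/2 : VHᵀ = I}. -/

import Mathlib

open Matrix BigOperators

def DoublyStochastic {r : ℕ} (M : Matrix (Fin r) (Fin r) ℝ) : Prop :=
  (∀ i j, 0 ≤ M i j) ∧ (∀ i, ∑ j, M i j = 1) ∧ (∀ j, ∑ i, M i j = 1)

def SuperStochastic {r : ℕ} (M : Matrix (Fin r) (Fin r) ℝ) : Prop :=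
  ∃ D N : Matrix (Fin r) (Fin r) ℝ,
    DoublyStochastic D ∧ (∀ i j, 0 ≤ N i j) ∧ M = D + N

def IsPermMatrix {r : ℕ} (M : Matrix (Fin r) (Fin r) ℝ) : Prop :=
  ∃ e : Equiv.Perm (Fin r), ∀ i j, M i j = if e i = j then 1 else 0

lemma permMatrix_basic {r : ℕ} (P : Matrix (Fin r) (Fin r) ℝ) (hP : IsPermMatrix P) :
    P = (1 / 2 : ℝ) • (Matrix.hadamard P P + Matrix.hadamard P P) ∧ P * Pᵀ = 1 := by
  obtain ⟨e, he⟩ := hP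
  constructor
  · ext i j
    simp only [Matrix.smul_apply, Matrix.add_apply, hadamard_apply, he, smul_eq_mul]
    split <;> norm_num
  · ext i j
    simp only [mul_apply, transpose_apply, he, one_apply]
    rw [Finset.sum_eq_single (e i)]
    · by_cases h : i = j
      · subst h; simp
      · have : e j ≠ e i := fun hc => h (e.injective hc.symm)
        simp [this, h]
    · intro k _ hk
      simp [Ne.symm hk]
    · simp

lemma ds_mem {r : ℕ} (D : Matrix (Fin r) (Fin r) ℝ) :
    DoublyStochastic D ↔ D ∈ doublyStochastic ℝ (Fin r) := by
  rw [mem_doublyStochastic_iff_sum]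
  exact Iff.rfl

lemma super_convex {r : ℕ} : Convex ℝ {M : Matrix (Fin r) (Fin r) ℝ | SuperStochastic M} := by
  rintro x ⟨Dx, Nx, hDx, hNx, rfl⟩ y ⟨Dy, Ny, hDy, hNy, rfl⟩ a b ha hb hab
  refine ⟨a • Dx + b • Dy, a • Nx + b • Ny, ?_, ?_, ?_⟩
  · rw [ds_mem] at *
    exact convex_doublyStochastic hDx hDy ha hb hab
  · intro i j
    have := hNx i j; have := hNy i j
    simp only [Matrix.add_apply, Matrix.smul_apply, smul_eq_mul]
    positivity
  · ext i j; simp; ring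

theorem permMatrix_in_S_and_extremePoints_subset (r : ℕ) :
    (∀ P : Matrix (Fin r) (Fin r) ℝ, IsPermMatrix P →
        P = (1 / 2 : ℝ) • (Matrix.hadamard P P + Matrix.hadamard P P) ∧
        P * Pᵀ = 1) ∧
    Set.extremePoints ℝ {M : Matrix (Fin r) (Fin r) ℝ | SuperStochastic M} ⊆
      {M : Matrix (Fin r) (Fin r) ℝ | ∃ V H : Matrix (Fin r) (Fin r) ℝ,
        V * Hᵀ = 1 ∧
        M = (1 / 2 : ℝ) • (Matrix.hadamard Vᵀ Vᵀ + Matrix.hadamard Hᵀ Hᵀ)} := by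
  refine ⟨fun P hP => permMatrix_basic P hP, ?_⟩
  intro E hE
  obtain ⟨hEmem, hExt⟩ := id hE
  obtain ⟨D, N, hD, hN, hEeq⟩ := hEmem
  -- Step 1: E = D (the nonnegative part is zero)
  have hDmem : SuperStochastic D := ⟨D, 0, hD, by simp, by simp⟩
  have hD2N : SuperStochastic (D + (2:ℝ) • N) := ⟨D, (2:ℝ) • N, hD, fun i j => by
    simpa using mul_nonneg (by norm_num : (0:ℝ) ≤ 2) (hN i j), rfl⟩
  have hseg : E ∈ openSegment ℝ D (D + (2:ℝ) • N) := by
    refine ⟨1/2, 1/2, by norm_num, by norm_num, by norm_num, ?_⟩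
    rw [hEeq]
    ext i j
    simp [Matrix.smul_apply, Matrix.add_apply]
    ring
  have hED : D = E := (hExt hDmem hD2N hseg)
  -- E is doubly stochastic
  have hEDS : E ∈ doublyStochastic ℝ (Fin r) := by
    rw [← hED, ← ds_mem]; exact hD
  -- Step 2: E is an extreme point of the convex hull of permutation matrices
  have hsubset : (doublyStochastic ℝ (Fin r) : Set (Matrix (Fin r) (Fin r) ℝ)) ⊆
      {M : Matrix (Fin r) (Fin r) ℝ | SuperStochastic M} := by
    intro M hM
    exact ⟨M, 0, (ds_mem M).2 hM, by simp, by simp⟩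
  have hEext' : E ∈ Set.extremePoints ℝ
      (doublyStochastic ℝ (Fin r) : Set (Matrix (Fin r) (Fin r) ℝ)) :=
    inter_extremePoints_subset_extremePoints_of_subset hsubset ⟨hEDS, hE⟩
  rw [doublyStochastic_eq_convexHull_permMatrix] at hEext'
  have hEperm : E ∈ {σ.permMatrix ℝ | σ : Equiv.Perm (Fin r)} :=
    extremePoints_convexHull_subset hEext'
  obtain ⟨σ, rfl⟩ := hEperm
  have hP : IsPermMatrix (σ.permMatrix ℝ) := by
    refine ⟨σ, fun i j => ?_⟩
    simp [Equiv.Perm.permMatrix, PEquiv.toMatrix_apply, Equiv.toPEquiv_apply, Option.mem_def,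
      eq_comm]
  obtain ⟨h1, h2⟩ := permMatrix_basic _ hP
  refine ⟨(σ.permMatrix ℝ)ᵀ, (σ.permMatrix ℝ)ᵀ, ?_, ?_⟩
  · rw [transpose_transpose]
    have h3 : (σ.permMatrix ℝ)ᵀ * σ.permMatrix ℝ = 1 := by
      have := permMatrix_basic _ (⟨σ.symm, fun i j => by
        simp [Equiv.Perm.permMatrix, PEquiv.toMatrix_apply, Equiv.toPEquiv_apply, Option.mem_def,
          transpose_apply, Equiv.eq_symm_apply, eq_comm]⟩ :
        IsPermMatrix (σ.permMatrix ℝ)ᵀ)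
      simpa [transpose_transpose] using this.2
    exact h3
  · simpa [transpose_transpose] using h1
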